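/- In the three-point loop algebra L = sl2 ⊗ K[T, T^{-1}, (T-1)^{-1}], the six elements X⊗1, Y⊗1, Z⊗1, Y⊗T + Z⊗(T-1), Z⊗T' + X⊗(T'-1), X⊗T'' + Y⊗(T''-1) (where T' = 1-T^{-1}, T'' = (1-T)^{-1}) satisfy the Tetrahedron algebra relations: each pair among the first three satisfies [X_{hi},X_{ij}] = 2X_{hi} + 2X_{ij} type relations, and each 'opposite' pair (e.g. X⊗1 and Y⊗T + Z⊗(T-1)) satisfies the Dolan-Grady relations [u,[u,[u,v]]] = 4[u,v] and [v,[v,[v,u]]] = 4[v,u]. -/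
import Mathlib

set_option synthInstance.maxHeartbeats 1000000
set_option maxHeartbeats 1000000

namespace TetPaper
variable {K : Type*} [Field K]

/-- Auxiliary bracket for `sl2` in the `X,Y,Z` coordinates, where
`[X,Y] = 2X+2Y`, `[Y,Z] = 2Y+2Z`, `[Z,X] = 2Z+2X`. -/
def sl2xb (u v : Fin 3 → K) : Fin 3 → K :=
  ![2*(u 0 * v 1 - u 1 * v 0) + 2*(u 2 * v 0 - u 0 * v 2),
    2*(u 0 * v 1 - u 1 * v 0) + 2*(u 1 * v 2 - u 2 * v 1),
    2*(u 2 * v 0 - u 0 * v 2) + 2*(u 1 * v 2 - u 2 * v 1)]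

lemma sl2xb_add_lie (x y z : Fin 3 → K) : sl2xb (x + y) z = sl2xb x z + sl2xb y z := by
  funext i; fin_cases i <;> simp [sl2xb] <;> ring

lemma sl2xb_lie_add (x y z : Fin 3 → K) : sl2xb x (y + z) = sl2xb x y + sl2xb x z := by
  funext i; fin_cases i <;> simp [sl2xb] <;> ring

lemma sl2xb_lie_self (x : Fin 3 → K) : sl2xb x x = 0 := by
  funext i; fin_cases i <;> simp [sl2xb, -mul_eq_zero] <;> ring

lemma sl2xb_leibniz (x y z : Fin 3 → K) :
    sl2xb x (sl2xb y z) = sl2xb (sl2xb x y) z + sl2xb y (sl2xb x z) := by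
  funext i; fin_cases i <;> simp [sl2xb] <;> ring

lemma sl2xb_smul (t : K) (x y : Fin 3 → K) : sl2xb x (t • y) = t • sl2xb x y := by
  funext i; fin_cases i <;> simp [sl2xb] <;> ring

end TetPaper

/-- The Lie algebra over `K` with basis `X, Y, Z` and brackets
`[X,Y] = 2X+2Y`, `[Y,Z] = 2Y+2Z`, `[Z,X] = 2Z+2X`. -/
def Sl2X (K : Type*) := Fin 3 → K

noncomputable instance {K : Type*} [Field K] : AddCommGroup (Sl2X K) :=
  inferInstanceAs (AddCommGroup (Fin 3 → K))

noncomputable instance {K : Type*} [Field K] : Module K (Sl2X K) :=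
  inferInstanceAs (Module K (Fin 3 → K))

noncomputable instance {K : Type*} [Field K] : LieRing (Sl2X K) where
  bracket u v := TetPaper.sl2xb u v
  add_lie x y z := TetPaper.sl2xb_add_lie x y z
  lie_add x y z := TetPaper.sl2xb_lie_add x y z
  lie_self x := TetPaper.sl2xb_lie_self x
  leibniz_lie x y z := TetPaper.sl2xb_leibniz x y z

noncomputable instance {K : Type*} [Field K] : LieAlgebra K (Sl2X K) where
  lie_smul t x y := TetPaper.sl2xb_smul t x y

namespace Sl2X
variable (K : Type*) [Field K]
/-- The basis vector `X`. -/
noncomputable def Xv : Sl2X K := (![1,0,0] : Fin 3 → K)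
/-- The basis vector `Y`. -/
noncomputable def Yv : Sl2X K := (![0,1,0] : Fin 3 → K)
/-- The basis vector `Z`. -/
noncomputable def Zv : Sl2X K := (![0,0,1] : Fin 3 → K)
end Sl2X
open scoped Polynomial

/-- The algebra `K[T, T⁻¹, (T-1)⁻¹]`, realized as the subalgebra of the field of
rational functions generated by `T`, `T⁻¹` and `(T-1)⁻¹`. -/
noncomputable def Arat (K : Type*) [Field K] : Subalgebra K (RatFunc K) :=
  Algebra.adjoin K {RatFunc.X, RatFunc.X⁻¹, (RatFunc.X - 1)⁻¹}

/-- The element `T` of `Arat K`. -/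
noncomputable def tA (K : Type*) [Field K] : Arat K :=
  ⟨RatFunc.X, Algebra.subset_adjoin (by simp)⟩

/-- The element `T⁻¹` of `Arat K`. -/
noncomputable def tiA (K : Type*) [Field K] : Arat K :=
  ⟨RatFunc.X⁻¹, Algebra.subset_adjoin (by simp)⟩

/-- The element `T' = 1 - T⁻¹` of `Arat K`. -/
noncomputable def tpA (K : Type*) [Field K] : Arat K := 1 - tiA K

/-- The element `T'' = (1-T)⁻¹` of `Arat K`. -/
noncomputable def tppA (K : Type*) [Field K] : Arat K :=
  ⟨(1 - RatFunc.X)⁻¹, by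
    have h1 : (RatFunc.X - 1)⁻¹ ∈ Arat K := Algebra.subset_adjoin (by simp)
    have h2 : ((1 : RatFunc K) - RatFunc.X)⁻¹ = -((RatFunc.X - 1)⁻¹) := by
      rw [← neg_sub, inv_neg]
    rw [h2]; exact neg_mem h1⟩

open scoped TensorProduct

/-- The three-point loop algebra `sl2 ⊗ K[T,T⁻¹,(T-1)⁻¹]`
(with the algebra factor written on the left). -/
noncomputable abbrev TPL (K : Type*) [Field K] := (Arat K) ⊗[K] Sl2X K

namespace Stmt11Aux

variable (K : Type*) [Field K] (A : Type*) [CommRing A] [Algebra K A]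

/-- basis element `1 ⊗ X` -/
noncomputable def e1 : A ⊗[K] Sl2X K := (1 : A) ⊗ₜ[K] Sl2X.Xv K
/-- basis element `1 ⊗ Y` -/
noncomputable def e2 : A ⊗[K] Sl2X K := (1 : A) ⊗ₜ[K] Sl2X.Yv K
/-- basis element `1 ⊗ Z` -/
noncomputable def e3 : A ⊗[K] Sl2X K := (1 : A) ⊗ₜ[K] Sl2X.Zv K

lemma raw_add_lie (x y z : A ⊗[K] Sl2X K) : ⁅x + y, z⁆ = ⁅x, z⁆ + ⁅y, z⁆ := add_lie x y z

lemma raw_lie_add (x y z : A ⊗[K] Sl2X K) : ⁅x, y + z⁆ = ⁅x, y⁆ + ⁅x, z⁆ := lie_add x y z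

lemma raw_smul_lie (t : A) (x y : A ⊗[K] Sl2X K) : ⁅t • x, y⁆ = t • ⁅x, y⁆ := smul_lie t x y

lemma raw_lie_smul (t : A) (x y : A ⊗[K] Sl2X K) : ⁅x, t • y⁆ = t • ⁅x, y⁆ := lie_smul t x y

lemma raw_lie_self (x : A ⊗[K] Sl2X K) : ⁅x, x⁆ = (0 : A ⊗[K] Sl2X K) := lie_self x

lemma lieXY : ⁅Sl2X.Xv K, Sl2X.Yv K⁆ = (2:K) • Sl2X.Xv K + (2:K) • Sl2X.Yv K := by
  show TetPaper.sl2xb ![1,0,0] ![0,1,0] =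
    ((2:K) • (![1,0,0] : Fin 3 → K)) + (2:K) • (![0,1,0] : Fin 3 → K)
  funext i; fin_cases i <;> simp [TetPaper.sl2xb]

lemma lieYZ : ⁅Sl2X.Yv K, Sl2X.Zv K⁆ = (2:K) • Sl2X.Yv K + (2:K) • Sl2X.Zv K := by
  show TetPaper.sl2xb ![0,1,0] ![0,0,1] =
    ((2:K) • (![0,1,0] : Fin 3 → K)) + (2:K) • (![0,0,1] : Fin 3 → K)
  funext i; fin_cases i <;> simp [TetPaper.sl2xb]

lemma lieZX : ⁅Sl2X.Zv K, Sl2X.Xv K⁆ = (2:K) • Sl2X.Zv K + (2:K) • Sl2X.Xv K := by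
  show TetPaper.sl2xb ![0,0,1] ![1,0,0] =
    ((2:K) • (![0,0,1] : Fin 3 → K)) + (2:K) • (![1,0,0] : Fin 3 → K)
  funext i; fin_cases i <;> simp [TetPaper.sl2xb]

lemma lie_e12 : ⁅e1 K A, e2 K A⁆ = (2:A) • e1 K A + (2:A) • e2 K A := by
  show ((1:A) * 1) ⊗ₜ[K] ⁅Sl2X.Xv K, Sl2X.Yv K⁆ = _
  rw [lieXY, one_mul, TensorProduct.tmul_add, TensorProduct.tmul_smul,
    TensorProduct.tmul_smul, ← algebraMap_smul A (2:K), map_ofNat,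
    ← algebraMap_smul A (2:K) ((1:A) ⊗ₜ[K] Sl2X.Yv K), map_ofNat]
  rfl

lemma lie_e23 : ⁅e2 K A, e3 K A⁆ = (2:A) • e2 K A + (2:A) • e3 K A := by
  show ((1:A) * 1) ⊗ₜ[K] ⁅Sl2X.Yv K, Sl2X.Zv K⁆ = _
  rw [lieYZ, one_mul, TensorProduct.tmul_add, TensorProduct.tmul_smul,
    TensorProduct.tmul_smul, ← algebraMap_smul A (2:K), map_ofNat,
    ← algebraMap_smul A (2:K) ((1:A) ⊗ₜ[K] Sl2X.Zv K), map_ofNat]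
  rfl

lemma lie_e31 : ⁅e3 K A, e1 K A⁆ = (2:A) • e3 K A + (2:A) • e1 K A := by
  show ((1:A) * 1) ⊗ₜ[K] ⁅Sl2X.Zv K, Sl2X.Xv K⁆ = _
  rw [lieZX, one_mul, TensorProduct.tmul_add, TensorProduct.tmul_smul,
    TensorProduct.tmul_smul, ← algebraMap_smul A (2:K), map_ofNat,
    ← algebraMap_smul A (2:K) ((1:A) ⊗ₜ[K] Sl2X.Xv K), map_ofNat]
  rfl

lemma lie_e21 : ⁅e2 K A, e1 K A⁆ = -((2:A) • e1 K A + (2:A) • e2 K A) := by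
  rw [← lie_e12, ← lie_skew]

lemma lie_e32 : ⁅e3 K A, e2 K A⁆ = -((2:A) • e2 K A + (2:A) • e3 K A) := by
  rw [← lie_e23, ← lie_skew]

lemma lie_e13 : ⁅e1 K A, e3 K A⁆ = -((2:A) • e3 K A + (2:A) • e1 K A) := by
  rw [← lie_e31, ← lie_skew]

/-- The general bracket formula in the `A`-span of `e1, e2, e3`. -/
lemma brkt (a b c a' b' c' : A) :
    ⁅a • e1 K A + b • e2 K A + c • e3 K A, a' • e1 K A + b' • e2 K A + c' • e3 K A⁆ =
      (2*(a*b'-b*a') + 2*(c*a'-a*c')) • e1 K A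
        + (2*(a*b'-b*a') + 2*(b*c'-c*b')) • e2 K A
        + (2*(c*a'-a*c') + 2*(b*c'-c*b')) • e3 K A := by
  simp only [raw_lie_add, raw_add_lie, raw_lie_smul, raw_smul_lie, lie_e12, lie_e23, lie_e31,
    lie_e21, lie_e32, lie_e13, raw_lie_self]
  module

lemma tsm (a : A) (v : Sl2X K) : a ⊗ₜ[K] v = a • ((1:A) ⊗ₜ[K] v) := by
  rw [TensorProduct.smul_tmul', smul_eq_mul, mul_one]

end Stmt11Aux


section DG
variable (K : Type*) [Field K] (A : Type*) [CommRing A] [Algebra K A]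
open Stmt11Aux

lemma rel12 : ⁅(1:A) • e1 K A + (0:A) • e2 K A + (0:A) • e3 K A,
    (0:A) • e1 K A + (1:A) • e2 K A + (0:A) • e3 K A⁆ =
    (2:K) • ((1:A) • e1 K A + (0:A) • e2 K A + (0:A) • e3 K A)
    + (2:K) • ((0:A) • e1 K A + (1:A) • e2 K A + (0:A) • e3 K A) := by
  rw [brkt]; match_scalars <;> simp only [map_ofNat] <;> ring

lemma rel23 : ⁅(0:A) • e1 K A + (1:A) • e2 K A + (0:A) • e3 K A,
    (0:A) • e1 K A + (0:A) • e2 K A + (1:A) • e3 K A⁆ =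
    (2:K) • ((0:A) • e1 K A + (1:A) • e2 K A + (0:A) • e3 K A)
    + (2:K) • ((0:A) • e1 K A + (0:A) • e2 K A + (1:A) • e3 K A) := by
  rw [brkt]; match_scalars <;> simp only [map_ofNat] <;> ring

lemma rel31 : ⁅(0:A) • e1 K A + (0:A) • e2 K A + (1:A) • e3 K A,
    (1:A) • e1 K A + (0:A) • e2 K A + (0:A) • e3 K A⁆ =
    (2:K) • ((0:A) • e1 K A + (0:A) • e2 K A + (1:A) • e3 K A)
    + (2:K) • ((1:A) • e1 K A + (0:A) • e2 K A + (0:A) • e3 K A) := by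
  rw [brkt]; match_scalars <;> simp only [map_ofNat] <;> ring

/-- generic Dolan-Grady relation, `e1`-type generator acting on `(0,t,t-1)`. -/
lemma dgE1 (t : A) :
    ⁅(1:A) • e1 K A + (0:A) • e2 K A + (0:A) • e3 K A,
     ⁅(1:A) • e1 K A + (0:A) • e2 K A + (0:A) • e3 K A,
      ⁅(1:A) • e1 K A + (0:A) • e2 K A + (0:A) • e3 K A,
       (0:A) • e1 K A + t • e2 K A + (t - 1) • e3 K A⁆⁆⁆ =
    (4:K) • ⁅(1:A) • e1 K A + (0:A) • e2 K A + (0:A) • e3 K A,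
       (0:A) • e1 K A + t • e2 K A + (t - 1) • e3 K A⁆ := by
  rw [brkt, brkt, brkt]; match_scalars <;> simp only [map_ofNat] <;> ring

lemma dgE1' (t : A) :
    ⁅(0:A) • e1 K A + t • e2 K A + (t - 1) • e3 K A,
     ⁅(0:A) • e1 K A + t • e2 K A + (t - 1) • e3 K A,
      ⁅(0:A) • e1 K A + t • e2 K A + (t - 1) • e3 K A,
       (1:A) • e1 K A + (0:A) • e2 K A + (0:A) • e3 K A⁆⁆⁆ =
    (4:K) • ⁅(0:A) • e1 K A + t • e2 K A + (t - 1) • e3 K A,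
       (1:A) • e1 K A + (0:A) • e2 K A + (0:A) • e3 K A⁆ := by
  rw [brkt, brkt, brkt]; match_scalars <;> simp only [map_ofNat] <;> ring

/-- generic Dolan-Grady relation, `e2`-type generator acting on `(t-1,0,t)`. -/
lemma dgE2 (t : A) :
    ⁅(0:A) • e1 K A + (1:A) • e2 K A + (0:A) • e3 K A,
     ⁅(0:A) • e1 K A + (1:A) • e2 K A + (0:A) • e3 K A,
      ⁅(0:A) • e1 K A + (1:A) • e2 K A + (0:A) • e3 K A,
       (t - 1) • e1 K A + (0:A) • e2 K A + t • e3 K A⁆⁆⁆ =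
    (4:K) • ⁅(0:A) • e1 K A + (1:A) • e2 K A + (0:A) • e3 K A,
       (t - 1) • e1 K A + (0:A) • e2 K A + t • e3 K A⁆ := by
  rw [brkt, brkt, brkt]; match_scalars <;> simp only [map_ofNat] <;> ring

lemma dgE2' (t : A) :
    ⁅(t - 1) • e1 K A + (0:A) • e2 K A + t • e3 K A,
     ⁅(t - 1) • e1 K A + (0:A) • e2 K A + t • e3 K A,
      ⁅(t - 1) • e1 K A + (0:A) • e2 K A + t • e3 K A,
       (0:A) • e1 K A + (1:A) • e2 K A + (0:A) • e3 K A⁆⁆⁆ =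
    (4:K) • ⁅(t - 1) • e1 K A + (0:A) • e2 K A + t • e3 K A,
       (0:A) • e1 K A + (1:A) • e2 K A + (0:A) • e3 K A⁆ := by
  rw [brkt, brkt, brkt]; match_scalars <;> simp only [map_ofNat] <;> ring

/-- generic Dolan-Grady relation, `e3`-type generator acting on `(t,t-1,0)`. -/
lemma dgE3 (t : A) :
    ⁅(0:A) • e1 K A + (0:A) • e2 K A + (1:A) • e3 K A,
     ⁅(0:A) • e1 K A + (0:A) • e2 K A + (1:A) • e3 K A,
      ⁅(0:A) • e1 K A + (0:A) • e2 K A + (1:A) • e3 K A,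
       t • e1 K A + (t - 1) • e2 K A + (0:A) • e3 K A⁆⁆⁆ =
    (4:K) • ⁅(0:A) • e1 K A + (0:A) • e2 K A + (1:A) • e3 K A,
       t • e1 K A + (t - 1) • e2 K A + (0:A) • e3 K A⁆ := by
  rw [brkt, brkt, brkt]; match_scalars <;> simp only [map_ofNat] <;> ring

lemma dgE3' (t : A) :
    ⁅t • e1 K A + (t - 1) • e2 K A + (0:A) • e3 K A,
     ⁅t • e1 K A + (t - 1) • e2 K A + (0:A) • e3 K A,
      ⁅t • e1 K A + (t - 1) • e2 K A + (0:A) • e3 K A,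
       (0:A) • e1 K A + (0:A) • e2 K A + (1:A) • e3 K A⁆⁆⁆ =
    (4:K) • ⁅t • e1 K A + (t - 1) • e2 K A + (0:A) • e3 K A,
       (0:A) • e1 K A + (0:A) • e2 K A + (1:A) • e3 K A⁆ := by
  rw [brkt, brkt, brkt]; match_scalars <;> simp only [map_ofNat] <;> ring

end DG


section HX
variable (K : Type*) [Field K] (A : Type*) [CommRing A] [Algebra K A]
open Stmt11Aux

lemma hxE1 : (1:A) ⊗ₜ[K] Sl2X.Xv K
    = (1:A) • e1 K A + (0:A) • e2 K A + (0:A) • e3 K A := by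
  rw [tsm]; simp only [e1, e2, e3]; module

lemma hxE2 : (1:A) ⊗ₜ[K] Sl2X.Yv K
    = (0:A) • e1 K A + (1:A) • e2 K A + (0:A) • e3 K A := by
  rw [tsm]; simp only [e1, e2, e3]; module

lemma hxE3 : (1:A) ⊗ₜ[K] Sl2X.Zv K
    = (0:A) • e1 K A + (0:A) • e2 K A + (1:A) • e3 K A := by
  rw [tsm]; simp only [e1, e2, e3]; module

lemma hxG1 (t : A) : t ⊗ₜ[K] Sl2X.Yv K + (t - 1) ⊗ₜ[K] Sl2X.Zv K
    = (0:A) • e1 K A + t • e2 K A + (t - 1) • e3 K A := by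
  rw [tsm K A t, tsm K A (t - 1)]; simp only [e1, e2, e3]; module

lemma hxG2 (t : A) : t ⊗ₜ[K] Sl2X.Zv K + (t - 1) ⊗ₜ[K] Sl2X.Xv K
    = (t - 1) • e1 K A + (0:A) • e2 K A + t • e3 K A := by
  rw [tsm K A t, tsm K A (t - 1)]; simp only [e1, e2, e3]; module

lemma hxG3 (t : A) : t ⊗ₜ[K] Sl2X.Xv K + (t - 1) ⊗ₜ[K] Sl2X.Yv K
    = t • e1 K A + (t - 1) • e2 K A + (0:A) • e3 K A := by
  rw [tsm K A t, tsm K A (t - 1)]; simp only [e1, e2, e3]; module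

end HX

set_option maxHeartbeats 10000000 in
/-- the images in the three-point loop algebra of the six generators of
the Tetrahedron algebra satisfy the asserted Tetrahedron relations. -/
theorem stmt11 (K : Type*) [Field K] [CharZero K]
    (x12 x23 x31 x03 x01 x02 : TPL K)
    (h12 : x12 = (1 : Arat K) ⊗ₜ[K] Sl2X.Xv K)
    (h23 : x23 = (1 : Arat K) ⊗ₜ[K] Sl2X.Yv K)
    (h31 : x31 = (1 : Arat K) ⊗ₜ[K] Sl2X.Zv K)
    (h03 : x03 = tA K ⊗ₜ[K] Sl2X.Yv K + (tA K - 1) ⊗ₜ[K] Sl2X.Zv K)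
    (h01 : x01 = tpA K ⊗ₜ[K] Sl2X.Zv K + (tpA K - 1) ⊗ₜ[K] Sl2X.Xv K)
    (h02 : x02 = tppA K ⊗ₜ[K] Sl2X.Xv K + (tppA K - 1) ⊗ₜ[K] Sl2X.Yv K) :
    (⁅x12, x23⁆ = (2:K) • x12 + (2:K) • x23) ∧
    (⁅x23, x31⁆ = (2:K) • x23 + (2:K) • x31) ∧
    (⁅x31, x12⁆ = (2:K) • x31 + (2:K) • x12) ∧
    (⁅x12, ⁅x12, ⁅x12, x03⁆⁆⁆ = (4:K) • ⁅x12, x03⁆) ∧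
    (⁅x03, ⁅x03, ⁅x03, x12⁆⁆⁆ = (4:K) • ⁅x03, x12⁆) ∧
    (⁅x23, ⁅x23, ⁅x23, x01⁆⁆⁆ = (4:K) • ⁅x23, x01⁆) ∧
    (⁅x01, ⁅x01, ⁅x01, x23⁆⁆⁆ = (4:K) • ⁅x01, x23⁆) ∧
    (⁅x31, ⁅x31, ⁅x31, x02⁆⁆⁆ = (4:K) • ⁅x31, x02⁆) ∧
    (⁅x02, ⁅x02, ⁅x02, x31⁆⁆⁆ = (4:K) • ⁅x02, x31⁆) := by
  open Stmt11Aux in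
  have ks : ∀ (k : K) (x : TPL K), k • x = (algebraMap K (Arat K) k) • x := fun k x =>
    (algebraMap_smul (Arat K) k x).symm
  have hx12 : x12 = (1:Arat K) • e1 K (Arat K) + (0:Arat K) • e2 K (Arat K) + (0:Arat K) • e3 K (Arat K) := by
    rw [h12]; exact hxE1 K (Arat K)
  have hx23 : x23 = (0:Arat K) • e1 K (Arat K) + (1:Arat K) • e2 K (Arat K) + (0:Arat K) • e3 K (Arat K) := by
    rw [h23]; exact hxE2 K (Arat K)
  have hx31 : x31 = (0:Arat K) • e1 K (Arat K) + (0:Arat K) • e2 K (Arat K) + (1:Arat K) • e3 K (Arat K) := by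
    rw [h31]; exact hxE3 K (Arat K)
  have hx03 : x03 = (0:Arat K) • e1 K (Arat K) + (tA K) • e2 K (Arat K) + (tA K - 1) • e3 K (Arat K) := by
    rw [h03]; exact hxG1 K (Arat K) (tA K)
  have hx01 : x01 = (tpA K - 1) • e1 K (Arat K) + (0:Arat K) • e2 K (Arat K) + (tpA K) • e3 K (Arat K) := by
    rw [h01]; exact hxG2 K (Arat K) (tpA K)
  have hx02 : x02 = (tppA K) • e1 K (Arat K) + (tppA K - 1) • e2 K (Arat K) + (0:Arat K) • e3 K (Arat K) := by
    rw [h02]; exact hxG3 K (Arat K) (tppA K)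
  have hx01' : x01 = (tpA K - 1) • e1 K (Arat K) + (0:Arat K) • e2 K (Arat K) + tpA K • e3 K (Arat K) := hx01
  refine ⟨?_, ?_, ?_, ?_, ?_, ?_, ?_, ?_, ?_⟩
  · rw [hx12, hx23]; exact rel12 K (Arat K)
  · rw [hx23, hx31]; exact rel23 K (Arat K)
  · rw [hx31, hx12]; exact rel31 K (Arat K)
  · rw [hx12, hx03]; exact dgE1 K (Arat K) (tA K)
  · rw [hx03, hx12]; exact dgE1' K (Arat K) (tA K)
  · rw [hx23, hx01']; exact dgE2 K (Arat K) (tpA K)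
  · rw [hx01', hx23]; exact dgE2' K (Arat K) (tpA K)
  · rw [hx31, hx02]; exact dgE3 K (Arat K) (tppA K)
  · rw [hx02, hx31]; exact dgE3' K (Arat K) (tppA K)
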